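/- Let G be a graph with a total order on its vertices and let u ∈ V(G). Then the stable-path tree T = T^<_{G,u} with root r = ū satisfies I(G-u,x)/I(G,x) = I(T-r,x)/I(T,x), i.e., I(G-u,x)·I(T,x) = I(G,x)·I(T-r,x). -/

import Mathlib

open Polynomial

noncomputable def indepPoly {V : Type*} [Finite V] (G : SimpleGraph V) : Polynomial ℝ :=
  haveI := Fintype.ofFinite V
  haveI := Classical.decPred fun s : Finset V => ∀ u ∈ s, ∀ v ∈ s, ¬G.Adj u v
  ∑ s ∈ Finset.univ.filter (fun s : Finset V => ∀ u ∈ s, ∀ v ∈ s, ¬G.Adj u v), X ^ s.card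


/-- A stable path in `G` from `u` with respect to the linear order on the vertices: a
self-avoiding path `v₀ = u, v₁, …, v_k` of `G` such that whenever `vᵢ` is adjacent to a
later non-consecutive vertex `vⱼ` (`i + 1 < j`), we have `v_{i+1} < vⱼ`. -/
def IsStablePath {V : Type*} [LinearOrder V] (G : SimpleGraph V) (u : V) (l : List V) : Prop :=
  l ≠ [] ∧ l.head? = some u ∧ l.Nodup ∧ l.Chain' G.Adj ∧
    ∀ i j : Fin l.length, (h : (i : ℕ) + 1 < (j : ℕ)) → G.Adj (l.get i) (l.get j) →
      l.get ⟨(i : ℕ) + 1, lt_trans h j.isLt⟩ < l.get j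

/-- The stable-path tree `T^<_{G,u}`: its vertices are the stable paths of `G` starting
at `u`, and two paths are adjacent iff one is obtained from the other by appending one
more vertex. -/
def stablePathTree {V : Type*} [LinearOrder V] (G : SimpleGraph V) (u : V) :
    SimpleGraph {l : List V // IsStablePath G u l} :=
  SimpleGraph.fromRel (fun a b => ∃ x : V, (b : List V) = (a : List V) ++ [x])

instance stablePathTreeFinite {V : Type*} [Finite V] [LinearOrder V] (G : SimpleGraph V)
    (u : V) : Finite {l : List V // IsStablePath G u l} := by
  haveI := Fintype.ofFinite V
  have h : {l : List V | IsStablePath G u l} ⊆ {l : List V | l.length ≤ Fintype.card V} := by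
    intro l hl
    exact List.Nodup.length_le_card hl.2.2.1
  exact ((List.finite_length_le V (Fintype.card V)).subset h).to_subtype

/-- The root `ū` of the stable-path tree: the one-vertex path `[u]`. -/
def sptRoot {V : Type*} [LinearOrder V] (G : SimpleGraph V) (u : V) :
    {l : List V // IsStablePath G u l} :=
  ⟨[u], by
    refine ⟨by simp, by simp, by simp, by exact List.isChain_singleton _, ?_⟩
    intro i j h _
    have hj := j.isLt
    simp only [List.length_singleton] at hj
    omega⟩

open Finset in
lemma indepPoly_comap_val {V : Type*} [Finite V] (G : SimpleGraph V) (p : V → Prop) :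
    haveI := Fintype.ofFinite V
    haveI := Classical.decPred fun s : Finset V =>
      (∀ a ∈ s, ∀ b ∈ s, ¬G.Adj a b) ∧ ∀ v ∈ s, p v
    indepPoly (G.comap (Subtype.val : {v // p v} → V)) =
      ∑ s ∈ Finset.univ.filter (fun s : Finset V =>
          (∀ a ∈ s, ∀ b ∈ s, ¬G.Adj a b) ∧ ∀ v ∈ s, p v), X ^ s.card := by
  classical
  haveI := Fintype.ofFinite V
  rw [indepPoly]
  refine Finset.sum_nbij' (fun s => s.map (Function.Embedding.subtype p))
    (fun s => s.subtype p) ?_ ?_ ?_ ?_ ?_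
  · intro s hs
    simp only [mem_filter, mem_univ, true_and] at hs ⊢
    constructor
    · rintro a ha b hb
      simp only [mem_map, Function.Embedding.coe_subtype] at ha hb
      obtain ⟨a', ha', rfl⟩ := ha
      obtain ⟨b', hb', rfl⟩ := hb
      exact hs a' ha' b' hb'
    · rintro v hv
      simp only [mem_map, Function.Embedding.coe_subtype] at hv
      obtain ⟨v', _, rfl⟩ := hv
      exact v'.2
  · intro s hs
    simp only [mem_filter, mem_univ, true_and] at hs ⊢
    intro a ha b hb
    rw [mem_subtype] at ha hb
    exact fun hadj => hs.1 _ ha _ hb hadj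
  · intro s hs
    simp only [mem_filter, mem_univ, true_and] at hs
    ext a
    simp only [mem_subtype, mem_map, Function.Embedding.coe_subtype]
    exact ⟨fun h => by
      obtain ⟨b, hb, hba⟩ := h
      have : b = a := Subtype.ext hba
      rwa [this] at hb, fun h => ⟨a, h, rfl⟩⟩
  · intro s hs
    simp only [mem_filter, mem_univ, true_and] at hs
    ext v
    simp only [mem_map, Function.Embedding.coe_subtype, mem_subtype]
    constructor
    · rintro ⟨a, ha, rfl⟩; exact ha
    · intro hv; exact ⟨⟨v, hs.2 v hv⟩, hv, rfl⟩
  · intro s hs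
    rw [Finset.card_map]

open Finset in
lemma indepPoly_deletion {V : Type*} [Finite V] (G : SimpleGraph V) (u : V) :
    indepPoly G =
      indepPoly (G.comap (Subtype.val : {v // v ≠ u} → V)) +
      X * indepPoly (G.comap (Subtype.val : {v // v ≠ u ∧ ¬G.Adj u v} → V)) := by
  classical
  haveI := Fintype.ofFinite V
  rw [indepPoly, indepPoly_comap_val, indepPoly_comap_val]
  rw [← Finset.sum_filter_add_sum_filter_not _ (fun s : Finset V => u ∉ s)
    (fun s : Finset V => (X : Polynomial ℝ) ^ s.card)]
  congr 1
  · apply Finset.sum_congr _ (fun _ _ => rfl)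
    ext s
    simp only [Finset.mem_filter, Finset.mem_univ, true_and]
    constructor
    · rintro ⟨h1, h2⟩
      exact ⟨h1, fun v hv => by rintro rfl; exact h2 hv⟩
    · rintro ⟨h1, h2⟩
      exact ⟨h1, fun hu => h2 u hu rfl⟩
  · rw [Finset.mul_sum]
    refine Finset.sum_nbij' (fun s => s.erase u) (fun s => insert u s) ?_ ?_ ?_ ?_ ?_
    · intro s hs
      simp only [mem_filter, mem_univ, true_and] at hs ⊢
      obtain ⟨h1, h2'⟩ := hs
      have h2 : u ∈ s := not_not.1 h2'
      refine ⟨fun a ha b hb => h1 a (mem_of_mem_erase ha) b (mem_of_mem_erase hb), ?_⟩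
      intro v hv
      exact ⟨ne_of_mem_erase hv, h1 u h2 v (mem_of_mem_erase hv)⟩
    · intro s hs
      simp only [mem_filter, mem_univ, true_and] at hs ⊢
      obtain ⟨h1, h2⟩ := hs
      refine ⟨?_, not_not.2 (mem_insert_self u s)⟩
      intro a ha b hb
      rcases mem_insert.1 ha with ha' | ha'
      · subst ha'
        rcases mem_insert.1 hb with hb' | hb'
        · subst hb'; exact fun h => G.loopless.irrefl _ h
        · exact (h2 b hb').2
      · rcases mem_insert.1 hb with hb' | hb'
        · subst hb'
          exact fun h => (h2 a ha').2 h.symm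
        · exact h1 a ha' b hb'
    · intro s hs
      simp only [mem_filter, mem_univ, true_and] at hs
      exact Finset.insert_erase (not_not.1 hs.2)
    · intro s hs
      simp only [mem_filter, mem_univ, true_and] at hs
      refine Finset.erase_insert ?_
      intro hu
      exact (hs.2 u hu).1 rfl
    · intro s hs
      simp only [mem_filter, mem_univ, true_and] at hs
      rw [Finset.card_erase_of_mem (not_not.1 hs.2), ← pow_succ']
      congr 1
      have : 0 < s.card := Finset.card_pos.2 ⟨u, not_not.1 hs.2⟩
      omega

open Finset in
lemma indepPoly_split {V : Type*} [Finite V] (G : SimpleGraph V) (a b c : V → Prop)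
    (habc : ∀ v, a v ↔ (b v ∨ c v)) (hdisj : ∀ v, b v → c v → False)
    (hedge : ∀ x y, b x → c y → ¬G.Adj x y) :
    indepPoly (G.comap (Subtype.val : {v // a v} → V)) =
      indepPoly (G.comap (Subtype.val : {v // b v} → V)) *
      indepPoly (G.comap (Subtype.val : {v // c v} → V)) := by
  classical
  haveI := Fintype.ofFinite V
  rw [indepPoly_comap_val, indepPoly_comap_val, indepPoly_comap_val, Finset.sum_mul_sum]
  rw [← Finset.sum_product']
  refine (Finset.sum_nbij' (fun s : Finset V => (s.filter b, s.filter c))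
    (fun p : Finset V × Finset V => p.1 ∪ p.2) ?_ ?_ ?_ ?_ ?_)
  · intro s hs
    simp only [mem_filter, mem_univ, true_and, Finset.mem_product] at hs ⊢
    obtain ⟨h1, h2⟩ := hs
    refine ⟨⟨fun x hx y hy => h1 x hx.1 y hy.1, fun v hv => hv.2⟩,
      ⟨fun x hx y hy => h1 x hx.1 y hy.1, fun v hv => hv.2⟩⟩
  · rintro ⟨s1, s2⟩ hs
    simp only [mem_filter, mem_univ, true_and, Finset.mem_product] at hs ⊢
    obtain ⟨⟨h1, hb1⟩, ⟨h2, hc2⟩⟩ := hs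
    constructor
    · intro x hx y hy
      rcases Finset.mem_union.1 hx with hx' | hx' <;> rcases Finset.mem_union.1 hy with hy' | hy'
      · exact h1 x hx' y hy'
      · exact hedge x y (hb1 x hx') (hc2 y hy')
      · exact fun h => hedge y x (hb1 y hy') (hc2 x hx') h.symm
      · exact h2 x hx' y hy'
    · intro v hv
      rcases Finset.mem_union.1 hv with hv' | hv'
      · exact (habc v).2 (Or.inl (hb1 v hv'))
      · exact (habc v).2 (Or.inr (hc2 v hv'))
  · intro s hs
    simp only [mem_filter, mem_univ, true_and] at hs
    ext v
    simp only [Finset.mem_union, mem_filter]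
    constructor
    · rintro (⟨hv, _⟩ | ⟨hv, _⟩) <;> exact hv
    · intro hv
      rcases (habc v).1 (hs.2 v hv) with h | h
      · exact Or.inl ⟨hv, h⟩
      · exact Or.inr ⟨hv, h⟩
  · rintro ⟨s1, s2⟩ hs
    simp only [mem_filter, mem_univ, true_and, Finset.mem_product] at hs
    obtain ⟨⟨_, hb1⟩, ⟨_, hc2⟩⟩ := hs
    have e1 : (s1 ∪ s2).filter b = s1 := by
      ext v
      simp only [mem_filter, Finset.mem_union]
      constructor
      · rintro ⟨hv | hv, hbv⟩
        · exact hv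
        · exact absurd hbv (fun h => hdisj v h (hc2 v hv))
      · intro hv; exact ⟨Or.inl hv, hb1 v hv⟩
    have e2 : (s1 ∪ s2).filter c = s2 := by
      ext v
      simp only [mem_filter, Finset.mem_union]
      constructor
      · rintro ⟨hv | hv, hcv⟩
        · exact absurd hcv (fun h => hdisj v (hb1 v hv) h)
        · exact hv
      · intro hv; exact ⟨Or.inr hv, hc2 v hv⟩
    simp [e1, e2]
  · intro s hs
    simp only [mem_filter, mem_univ, true_and] at hs
    have hdis : Disjoint (s.filter b) (s.filter c) := by
      refine Finset.disjoint_left.2 ?_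
      intro v hv hv'
      exact hdisj v (mem_filter.1 hv).2 (mem_filter.1 hv').2
    have : (s.filter b).card + (s.filter c).card = s.card := by
      rw [← Finset.card_union_of_disjoint hdis]
      congr 1
      ext v
      simp only [Finset.mem_union, mem_filter]
      constructor
      · rintro (⟨hv, _⟩ | ⟨hv, _⟩) <;> exact hv
      · intro hv
        rcases (habc v).1 (hs.2 v hv) with h | h
        · exact Or.inl ⟨hv, h⟩
        · exact Or.inr ⟨hv, h⟩
    rw [← pow_add, this]

lemma indepPoly_comap_eq_of_equiv {A : Type*} {B : Type*} [Finite A] [Finite B]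
    {G : SimpleGraph A} {H : SimpleGraph B} {p : A → Prop}
    (e : {a // p a} ≃ B)
    (hadj : ∀ x y : {a // p a}, G.Adj ↑x ↑y ↔ H.Adj (e x) (e y)) :
    indepPoly (G.comap (Subtype.val : {a // p a} → A)) = indepPoly H := by
  classical
  rw [indepPoly, indepPoly]
  refine Finset.sum_nbij' (fun s => s.map e.toEmbedding) (fun s => s.map e.symm.toEmbedding)
    ?_ ?_ ?_ ?_ ?_
  · intro s hs
    simp only [Finset.mem_filter, Finset.mem_univ, true_and] at hs ⊢
    intro x hx y hy
    simp only [Finset.mem_map, Equiv.coe_toEmbedding] at hx hy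
    obtain ⟨x', hx', rfl⟩ := hx
    obtain ⟨y', hy', rfl⟩ := hy
    exact fun h => hs x' hx' y' hy' ((hadj x' y').2 h)
  · intro s hs
    simp only [Finset.mem_filter, Finset.mem_univ, true_and] at hs ⊢
    intro x hx y hy
    simp only [Finset.mem_map, Equiv.coe_toEmbedding] at hx hy
    obtain ⟨x', hx', rfl⟩ := hx
    obtain ⟨y', hy', rfl⟩ := hy
    intro h
    have := (hadj (e.symm x') (e.symm y')).1 h
    simp only [Equiv.apply_symm_apply] at this
    exact hs x' hx' y' hy' this
  · intro s _
    simp [Finset.map_map]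
  · intro s _
    simp [Finset.map_map]
  · intro s _
    rw [Finset.card_map]

lemma indepPoly_comap_congr {V : Type*} [Finite V] (G : SimpleGraph V) {p q : V → Prop}
    (h : ∀ v, p v ↔ q v) :
    indepPoly (G.comap (Subtype.val : {v // p v} → V)) =
      indepPoly (G.comap (Subtype.val : {v // q v} → V)) := by
  refine indepPoly_comap_eq_of_equiv (Equiv.subtypeEquivRight h) ?_
  intro x y
  rfl

lemma indepPoly_of_isEmpty {V : Type*} [Finite V] [IsEmpty V] (G : SimpleGraph V) :
    indepPoly G = 1 := by
  classical
  haveI := Fintype.ofFinite V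
  rw [indepPoly]
  have h0 : ∀ s : Finset V, s = ∅ := fun s => Finset.eq_empty_of_isEmpty s
  refine (Finset.sum_eq_single_of_mem (∅ : Finset V) ?_ ?_).trans ?_
  · simp
    exact (h0 default).symm
  · exact fun b _ hb => absurd (h0 b) hb
  · simp

section SPT
variable {V : Type*} [LinearOrder V] {G : SimpleGraph V} {u : V}

lemma isp_cons {l : List V} (hl : IsStablePath G u l) : ∃ t, l = u :: t := by
  obtain ⟨hne, hh, -⟩ := hl
  cases l with
  | nil => exact absurd rfl hne
  | cons a t =>
    simp only [List.head?_cons, Option.some.injEq] at hh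
    exact ⟨t, by rw [hh]⟩

lemma isp_cons' {l : List V} (hl : IsStablePath G u l) : l = u :: l.tail := by
  obtain ⟨t, ht⟩ := isp_cons hl
  rw [ht]
  rfl

lemma isp_stab {l : List V} (hl : IsStablePath G u l) {i j : ℕ} (hij : i + 1 < j)
    (hj : j < l.length) (hadj : G.Adj l[i] l[j]) : l[i + 1] < l[j] := by
  have hi : i < l.length := by omega
  have := hl.2.2.2.2 ⟨i, hi⟩ ⟨j, hj⟩ hij
  simp only [List.get_eq_getElem] at this
  exact this hadj

lemma isp_eq_root {l : List V} (hl : IsStablePath G u l) (h1 : l.length = 1) : l = [u] := by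
  obtain ⟨t, rfl⟩ := isp_cons hl
  simp only [List.length_cons] at h1
  rw [List.length_eq_zero_iff.1 (show t.length = 0 by omega)]

lemma isp_adj_second {t : List V} (hl : IsStablePath G u (u :: t)) (h2 : 0 < t.length) :
    G.Adj u (t[0]'h2) := by
  have hch := hl.2.2.2.1
  cases t with
  | nil => simp at h2
  | cons b t' => exact (List.isChain_cons_cons.1 hch).1

lemma tail_pred {t : List V} (hl : IsStablePath G u (u :: t)) {w : V}
    (h2 : t[0]? = some w) :
    ∀ v ∈ t, v ≠ u ∧ (G.Adj u v → w ≤ v) := by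
  intro v hv
  obtain ⟨h0len, h0get⟩ := List.getElem?_eq_some_iff.1 h2
  have hnd := hl.2.2.1
  constructor
  · intro hvu
    exact (List.nodup_cons.1 hnd).1 (hvu ▸ hv)
  · intro hadj
    obtain ⟨k, hk, hkv⟩ := List.mem_iff_getElem.1 hv
    rcases Nat.eq_zero_or_pos k with rfl | hkpos
    · rw [← hkv, h0get]
    · have hkl : k + 1 < (u :: t).length := by simpa using hk
      have hadj' : G.Adj ((u :: t)[0]) ((u :: t)[k + 1]'hkl) := by
        simpa [hkv] using hadj
      have := isp_stab hl (i := 0) (j := k + 1) (by omega) hkl hadj'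
      simp only [List.getElem_cons_succ, List.getElem_cons_zero] at this
      rw [h0get, hkv] at this
      exact le_of_lt this


variable (G u) in
/-- The vertex set of the graph `G^w`. -/
def sptPred (w : V) (v : V) : Prop := v ≠ u ∧ (G.Adj u v → w ≤ v)

lemma map_val_pmap_mk {α : Type*} {p : α → Prop} :
    ∀ (t : List α) (h : ∀ a ∈ t, p a),
      List.map Subtype.val (t.pmap Subtype.mk h) = t := by
  intro t
  induction t with
  | nil => intro h; simp
  | cons a t ih => intro h; simp [ih]

lemma isp_tail {w : V} (hw : G.Adj u w) {t : List V} (hl : IsStablePath G u (u :: t))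
    (h2 : t[0]? = some w)
    (hmem : ∀ v ∈ t, sptPred G u w v) :
    IsStablePath (G.comap (Subtype.val : {v // sptPred G u w v} → V))
      ⟨w, hw.ne', fun _ => le_refl w⟩ (t.pmap Subtype.mk hmem) := by
  obtain ⟨h0len, h0get⟩ := List.getElem?_eq_some_iff.1 h2
  refine ⟨?_, ?_, ?_, ?_, ?_⟩
  · intro hnil
    have hlen := congrArg List.length hnil
    rw [List.length_pmap] at hlen
    simp only [List.length_nil] at hlen
    omega
  · rw [List.head?_eq_getElem?]
    have hlen : 0 < (t.pmap Subtype.mk hmem).length := by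
      rw [List.length_pmap]; omega
    rw [List.getElem?_eq_getElem hlen]
    congr 1
    apply Subtype.ext
    simp [List.getElem_pmap, h0get]
  · exact List.Nodup.pmap (fun a _ b _ h => congrArg Subtype.val h)
      (List.nodup_cons.1 hl.2.2.1).2
  · have hch : t.Chain' G.Adj := (List.isChain_cons.1 hl.2.2.2.1).2
    refine (List.isChain_map (Subtype.val :
        {v // sptPred G u w v} → V)).1 ?_
    rw [map_val_pmap_mk]
    exact hch
  · intro i j hij hadj
    rcases i with ⟨ii, hilt⟩
    rcases j with ⟨jj, hjlt⟩
    have hij' : ii + 1 < jj := hij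
    simp only [List.get_eq_getElem] at hadj ⊢
    simp only [List.length_pmap] at hilt hjlt
    simp only [List.getElem_pmap] at hadj ⊢
    rw [Subtype.mk_lt_mk]
    have hadj' : G.Adj ((u :: t)[ii + 1]'(by simp; omega))
        ((u :: t)[jj + 1]'(by simp; omega)) := by
      simpa using hadj
    have := isp_stab hl (i := ii + 1) (j := jj + 1) (by simp; omega)
      (by simp; omega) hadj'
    simpa using this

lemma isp_cons_of {w : V} (hw : G.Adj u w) {m : List {v // sptPred G u w v}}
    (hm : IsStablePath (G.comap (Subtype.val : {v // sptPred G u w v} → V))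
      ⟨w, hw.ne', fun _ => le_refl w⟩ m) :
    IsStablePath G u (u :: m.map Subtype.val) ∧
      (m.map Subtype.val)[0]? = some w := by
  obtain ⟨m', rfl⟩ := isp_cons hm
  constructor
  · refine ⟨by simp, by simp, ?_, ?_, ?_⟩
    · rw [List.nodup_cons]
      constructor
      · intro hu
        simp only [List.mem_map] at hu
        obtain ⟨x, _, hx⟩ := hu
        exact x.2.1 hx
      · exact List.Nodup.map Subtype.val_injective hm.2.2.1
    · refine List.isChain_cons.2 ?_
      refine ⟨?_, ?_⟩
      · intro y hy
        simp only [List.map_cons, List.head?_cons, Option.mem_def, Option.some.injEq] at hy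
        rw [← hy]
        exact hw
      · exact (List.isChain_map (Subtype.val : {v // sptPred G u w v} → V)).2 hm.2.2.2.1
    · intro i j hij hadj
      rcases i with ⟨ii, hilt⟩
      rcases j with ⟨jj, hjlt⟩
      have hij' : ii + 1 < jj := hij
      simp only [List.get_eq_getElem] at hadj ⊢
      simp only [List.length_cons, List.length_map] at hilt hjlt
      rcases ii with _ | iv
      · rcases jj with _ | jj1
        · omega
        rcases jj1 with _ | jv
        · omega
        have hjv : jv < m'.length := by omega
        simp only [List.getElem_cons_zero, List.getElem_cons_succ, List.getElem_map]
          at hadj ⊢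
        -- hadj : G.Adj u ↑(m'[jv]), goal : w < ↑(m'[jv]) (coe of mk simplifies)
        have hge : w ≤ (m'[jv]'hjv).val := (m'[jv]'hjv).2.2 hadj
        have hne : (m'[jv]'hjv).val ≠ w := by
          intro heq
          have heq' : (m'[jv]'hjv) = ⟨w, hw.ne', fun _ => le_refl w⟩ := Subtype.ext heq
          have hnd := hm.2.2.1
          rw [List.nodup_cons] at hnd
          exact hnd.1 (heq' ▸ List.getElem_mem hjv)
        exact lt_of_le_of_ne hge (Ne.symm hne)
      · rcases jj with _ | jv
        · omega
        simp only [List.getElem_cons_succ, List.getElem_map] at hadj ⊢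
        have hjvlt : jv < m'.length + 1 := by omega
        have hadj' : (G.comap (Subtype.val : {v // sptPred G u w v} → V)).Adj
            (((⟨w, hw.ne', fun _ => le_refl w⟩ :: m'))[iv]'(by simp; omega))
            (((⟨w, hw.ne', fun _ => le_refl w⟩ :: m'))[jv]'(by simp; omega)) := hadj
        have := isp_stab hm (i := iv) (j := jv) (by omega) (by simp; omega) hadj'
        exact this
  · cases m' with
    | nil => simp
    | cons a t => simp

end SPT

section CORE
variable {V : Type*} [LinearOrder V] {G : SimpleGraph V} {u : V}

lemma spt_eq_root_iff (p : {l : List V // IsStablePath G u l}) :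
    p = sptRoot G u ↔ p.val.length = 1 := by
  constructor
  · rintro rfl; rfl
  · intro h1
    exact Subtype.ext (isp_eq_root p.2 h1)

lemma pmap_mk_map_val {α : Type*} {p : α → Prop}
    (m : List {a // p a}) (h : ∀ a ∈ List.map Subtype.val m, p a) :
    (List.map Subtype.val m).pmap Subtype.mk h = m := by
  apply List.map_injective_iff.2 Subtype.val_injective
  rw [map_val_pmap_mk]

lemma exists_append_map {α β : Type*} {f : α → β} (hf : Function.Injective f)
    {a b : List α} :
    (∃ x : β, List.map f b = List.map f a ++ [x]) ↔ ∃ y : α, b = a ++ [y] := by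
  constructor
  · rintro ⟨x, hx⟩
    have hxmem : x ∈ List.map f b := by rw [hx]; simp
    obtain ⟨y, hy, rfl⟩ := List.mem_map.1 hxmem
    refine ⟨y, List.map_injective_iff.2 hf ?_⟩
    rw [hx, List.map_append, List.map_singleton]
  · rintro ⟨y, rfl⟩
    exact ⟨f y, by simp⟩

variable (G u) in
lemma isp_hyp1 {w : V} (l : {l : List V // IsStablePath G u l ∧ l[1]? = some w}) :
    IsStablePath G u (u :: l.val.tail) := by
  have := l.2.1
  rwa [isp_cons' l.2.1] at this

variable (G u) in
lemma isp_hyp2 {w : V} (l : {l : List V // IsStablePath G u l ∧ l[1]? = some w}) :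
    l.val.tail[0]? = some w := by
  have := l.2.2
  rw [isp_cons' l.2.1] at this
  simpa using this

/-- The core structural equivalence. -/
noncomputable def sptEquiv {w : V} (hw : G.Adj u w) :
    {l : List V // IsStablePath G u l ∧ l[1]? = some w} ≃
      {m : List {v // sptPred G u w v} //
        IsStablePath (G.comap (Subtype.val : {v // sptPred G u w v} → V))
          ⟨w, hw.ne', fun _ => le_refl w⟩ m} where
  toFun l := ⟨l.val.tail.pmap Subtype.mk (tail_pred (isp_hyp1 G u l) (isp_hyp2 G u l)),
    isp_tail hw (isp_hyp1 G u l) (isp_hyp2 G u l) _⟩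
  invFun m := ⟨u :: List.map Subtype.val m.val, (isp_cons_of hw m.2).1,
    by simpa using (isp_cons_of hw m.2).2⟩
  left_inv := by
    rintro ⟨l, hl, h2⟩
    apply Subtype.ext
    simp only [map_val_pmap_mk]
    exact (congrArg (u :: ·) (map_val_pmap_mk _ _)).trans (isp_cons' hl).symm
  right_inv := by
    rintro ⟨m, hm⟩
    apply Subtype.ext
    simp only [List.tail_cons, pmap_mk_map_val]

lemma sptEquiv_symm_coe {w : V} (hw : G.Adj u w)
    (m : {m : List {v // sptPred G u w v} //
        IsStablePath (G.comap (Subtype.val : {v // sptPred G u w v} → V))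
          ⟨w, hw.ne', fun _ => le_refl w⟩ m}) :
    ((sptEquiv hw).symm m).val = u :: List.map Subtype.val m.val := rfl

lemma sptEquiv_length {w : V} (hw : G.Adj u w)
    (l : {l : List V // IsStablePath G u l ∧ l[1]? = some w}) :
    ((sptEquiv hw) l).val.length + 1 = l.val.length := by
  have h : ((sptEquiv hw) l).val.length = l.val.tail.length := by
    exact List.length_pmap
  have hpos : 0 < l.val.length := List.length_pos_iff.2 l.2.1.1
  rw [h, List.length_tail]
  omega

lemma isp_second_adj (p : {l : List V // IsStablePath G u l}) {v : V}
    (h : p.val[1]? = some v) : G.Adj u v := by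
  obtain ⟨hlt, hget⟩ := List.getElem?_eq_some_iff.1 h
  have hl : IsStablePath G u (u :: p.val.tail) := by
    have := p.2
    rwa [isp_cons' p.2] at this
  have htlen : 0 < p.val.tail.length := by
    rw [List.length_tail]; omega
  have := isp_adj_second hl htlen
  have hco : p.val.tail[0]'htlen = v := by
    rw [List.getElem_tail]
    exact hget
  rwa [hco] at this

lemma spt_adj_root_iff (p : {l : List V // IsStablePath G u l}) :
    (stablePathTree G u).Adj (sptRoot G u) p ↔ p.val.length = 2 := by
  rw [stablePathTree, SimpleGraph.fromRel_adj]
  constructor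
  · rintro ⟨hne, ⟨x, hx⟩ | ⟨x, hx⟩⟩
    · have := congrArg List.length hx
      simpa [sptRoot] using this
    · have := congrArg List.length hx
      simp only [sptRoot, List.length_singleton, List.length_append] at this
      have hpos : 0 < p.val.length := List.length_pos_iff.2 p.2.1
      omega
  · intro h2
    have hc := isp_cons' p.2
    have htlen : p.val.tail.length = 1 := by
      rw [List.length_tail, h2]
    obtain ⟨x, hx⟩ := List.length_eq_one_iff.1 htlen
    constructor
    · intro heq
      rw [← heq] at h2
      simp [sptRoot] at h2
    · left
      exact ⟨x, by rw [hc, hx]; rfl⟩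

lemma spt_adj_second {p q : {l : List V // IsStablePath G u l}}
    (h : (stablePathTree G u).Adj p q) (hp : 2 ≤ p.val.length) (hq : 2 ≤ q.val.length) :
    p.val[1]? = q.val[1]? := by
  rw [stablePathTree, SimpleGraph.fromRel_adj] at h
  rcases h.2 with ⟨x, hx⟩ | ⟨x, hx⟩
  · rw [hx]
    exact (List.getElem?_append_left (by omega)).symm
  · rw [hx]
    exact List.getElem?_append_left (by omega)

/-- The flattened core equivalence. -/
noncomputable def sptFullEquiv {w : V} (hw : G.Adj u w) :
    {p : {l : List V // IsStablePath G u l} // p.val[1]? = some w} ≃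
      {m : List {v // sptPred G u w v} //
        IsStablePath (G.comap (Subtype.val : {v // sptPred G u w v} → V))
          ⟨w, hw.ne', fun _ => le_refl w⟩ m} :=
  (Equiv.subtypeSubtypeEquivSubtypeInter (IsStablePath G u)
    (fun l => l[1]? = some w)).trans (sptEquiv hw)

lemma sptFullEquiv_symm_coe {w : V} (hw : G.Adj u w)
    (m : {m : List {v // sptPred G u w v} //
        IsStablePath (G.comap (Subtype.val : {v // sptPred G u w v} → V))
          ⟨w, hw.ne', fun _ => le_refl w⟩ m}) :
    (((sptFullEquiv hw).symm m : {l : List V // IsStablePath G u l}) : List V) =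
      u :: List.map Subtype.val m.val := rfl

lemma sptFullEquiv_adj {w : V} (hw : G.Adj u w)
    (x y : {p : {l : List V // IsStablePath G u l} // p.val[1]? = some w}) :
    (stablePathTree G u).Adj ↑x ↑y ↔
      (stablePathTree (G.comap (Subtype.val : {v // sptPred G u w v} → V))
        ⟨w, hw.ne', fun _ => le_refl w⟩).Adj (sptFullEquiv hw x) (sptFullEquiv hw y) := by
  suffices h : ∀ m n, (stablePathTree G u).Adj ↑((sptFullEquiv hw).symm m)
      ↑((sptFullEquiv hw).symm n) ↔
      (stablePathTree (G.comap (Subtype.val : {v // sptPred G u w v} → V))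
        ⟨w, hw.ne', fun _ => le_refl w⟩).Adj m n by
    have := h (sptFullEquiv hw x) (sptFullEquiv hw y)
    simpa only [Equiv.symm_apply_apply] using this
  intro m n
  rw [stablePathTree, stablePathTree, SimpleGraph.fromRel_adj, SimpleGraph.fromRel_adj]
  have hinj : Function.Injective (Subtype.val : {v // sptPred G u w v} → V) :=
    Subtype.val_injective
  have hrel : ∀ (a b : {m : List {v // sptPred G u w v} //
      IsStablePath (G.comap (Subtype.val : {v // sptPred G u w v} → V))
          ⟨w, hw.ne', fun _ => le_refl w⟩ m}),
      ((∃ x : V, (((sptFullEquiv hw).symm b : {l : List V // IsStablePath G u l}) : List V) =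
        (((sptFullEquiv hw).symm a : {l : List V // IsStablePath G u l}) : List V) ++ [x]) ↔
       ∃ y : {v // sptPred G u w v}, (b : List _) = (a : List _) ++ [y]) := by
    intro a b
    rw [sptFullEquiv_symm_coe, sptFullEquiv_symm_coe]
    constructor
    · rintro ⟨x, hx⟩
      simp only [List.cons_append, List.cons.injEq, true_and] at hx
      exact (exists_append_map hinj).1 ⟨x, hx⟩
    · rintro ⟨y, hy⟩
      refine ⟨y.val, ?_⟩
      rw [hy]
      simp
  refine and_congr ?_ (or_congr (hrel m n) (hrel n m))
  constructor
  · intro hne heq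
    exact hne (by rw [heq])
  · intro hne heq
    apply hne
    have h1 : (((sptFullEquiv hw).symm m : {l : List V // IsStablePath G u l}) : List V) =
        (((sptFullEquiv hw).symm n : {l : List V // IsStablePath G u l}) : List V) := by
      rw [heq]
    rw [sptFullEquiv_symm_coe, sptFullEquiv_symm_coe] at h1
    simp only [List.cons.injEq, true_and] at h1
    exact Subtype.ext (List.map_injective_iff.2 hinj h1)

lemma sptFullEquiv_eq_root_iff {w : V} (hw : G.Adj u w)
    (x : {p : {l : List V // IsStablePath G u l} // p.val[1]? = some w}) :
    sptFullEquiv hw x = sptRoot (G.comap (Subtype.val : {v // sptPred G u w v} → V))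
      ⟨w, hw.ne', fun _ => le_refl w⟩ ↔ (x : {l : List V // IsStablePath G u l}).val.length = 2 := by
  rw [spt_eq_root_iff]
  have hlen := sptEquiv_length hw
    ((Equiv.subtypeSubtypeEquivSubtypeInter (IsStablePath G u) (fun l => l[1]? = some w)) x)
  have heq : (sptFullEquiv hw x) = sptEquiv hw
      ((Equiv.subtypeSubtypeEquivSubtypeInter (IsStablePath G u) (fun l => l[1]? = some w)) x) :=
    rfl
  have hval : (((Equiv.subtypeSubtypeEquivSubtypeInter (IsStablePath G u)
      (fun l => l[1]? = some w)) x) : List V) = (x : {l : List V // IsStablePath G u l}).val :=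
    rfl
  rw [heq]
  rw [hval] at hlen
  omega

end CORE

section MASTER

universe u

open SimpleGraph

variable {V : Type u} [Finite V] [LinearOrder V]

/-- The main identity. -/
def SPTId {V : Type u} [Finite V] [LinearOrder V] (G : SimpleGraph V) (u : V) : Prop :=
  indepPoly (G.comap (Subtype.val : {v : V // v ≠ u} → V)) *
      indepPoly (stablePathTree G u) =
    indepPoly G *
      indepPoly ((stablePathTree G u).comap
        (Subtype.val :
          {p : {l : List V // IsStablePath G u l} // p ≠ sptRoot G u} →
            {l : List V // IsStablePath G u l}))

variable (G : SimpleGraph V) (u : V)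

def gpred (S : Finset V) (v : V) : Prop := v ≠ u ∧ (G.Adj u v → v ∈ S)

def tpred (S : Finset V) (p : {l : List V // IsStablePath G u l}) : Prop :=
  2 ≤ p.val.length ∧ ∃ w ∈ S, p.val[1]? = some w

def t3pred (S : Finset V) (p : {l : List V // IsStablePath G u l}) : Prop :=
  3 ≤ p.val.length ∧ ∃ w ∈ S, p.val[1]? = some w

lemma spt_master {n : ℕ}
    (ih : ∀ (W : Type u) [Finite W] [LinearOrder W] (H : SimpleGraph W) (x : W),
      Nat.card W ≤ n → SPTId H x)
    (hV : Nat.card V ≤ n + 1)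
    (S : Finset V) (hSN : ∀ v ∈ S, G.Adj u v)
    (hup : ∀ a ∈ S, ∀ b, G.Adj u b → a ≤ b → b ∈ S) :
    indepPoly (G.comap (Subtype.val : {v // gpred G u S v} → V)) *
        indepPoly ((stablePathTree G u).comap
          (Subtype.val : {p // t3pred G u S p} → {l : List V // IsStablePath G u l})) =
      indepPoly (G.comap (Subtype.val : {v // v ≠ u ∧ ¬G.Adj u v} → V)) *
        indepPoly ((stablePathTree G u).comap
          (Subtype.val : {p // tpred G u S p} → {l : List V // IsStablePath G u l})) := by
  classical
  revert hSN hup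
  induction S using Finset.strongInduction with
  | _ S ihS =>
  intro hSN hup
  rcases S.eq_empty_or_nonempty with rfl | hSne
  · haveI h1 : IsEmpty {p : {l : List V // IsStablePath G u l} // t3pred G u ∅ p} :=
      ⟨fun x => by obtain ⟨-, w, hw, -⟩ := x.2; simp at hw⟩
    haveI h2 : IsEmpty {p : {l : List V // IsStablePath G u l} // tpred G u ∅ p} :=
      ⟨fun x => by obtain ⟨-, w, hw, -⟩ := x.2; simp at hw⟩
    rw [indepPoly_of_isEmpty ((stablePathTree G u).comap
        (Subtype.val : {p // t3pred G u ∅ p} → {l : List V // IsStablePath G u l})),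
      indepPoly_of_isEmpty ((stablePathTree G u).comap
        (Subtype.val : {p // tpred G u ∅ p} → {l : List V // IsStablePath G u l})),
      mul_one, mul_one]
    refine indepPoly_comap_congr G (fun v => ?_)
    constructor
    · rintro ⟨hv1, hv2⟩
      exact ⟨hv1, fun ha => absurd (hv2 ha) (Finset.notMem_empty v)⟩
    · rintro ⟨hv1, hv2⟩
      exact ⟨hv1, fun ha => absurd ha hv2⟩
  · -- S nonempty
    set w := S.min' hSne with hwdef
    have hwS : w ∈ S := S.min'_mem hSne
    have hw : G.Adj u w := hSN w hwS
    set S' := S.erase w with hS'def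
    have hS'sub : S' ⊂ S := Finset.erase_ssubset hwS
    have hSN' : ∀ v ∈ S', G.Adj u v := fun v hv => hSN v (Finset.mem_of_mem_erase hv)
    have hup' : ∀ a ∈ S', ∀ b, G.Adj u b → a ≤ b → b ∈ S' := by
      intro a ha b hb hab
      have haS := Finset.mem_of_mem_erase ha
      have hbS : b ∈ S := hup a haS b hb hab
      refine Finset.mem_erase.2 ⟨?_, hbS⟩
      intro hbw
      have hwa : w ≤ a := S.min'_le a haS
      have hab2 : a ≤ w := hbw ▸ hab
      exact (Finset.mem_erase.1 ha).1 (le_antisymm hab2 hwa)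
    -- predicates
    have hf1 : ∀ v, gpred G u S v ↔ sptPred G u w v := by
      intro v
      constructor
      · rintro ⟨h1, h2⟩
        exact ⟨h1, fun ha => S.min'_le v (h2 ha)⟩
      · rintro ⟨h1, h2⟩
        exact ⟨h1, fun ha => hup w hwS v ha (h2 ha)⟩
    -- graph-side equalities
    have hg1 : indepPoly (G.comap (Subtype.val : {v // gpred G u S v} → V)) =
        indepPoly (G.comap (Subtype.val : {v // sptPred G u w v} → V)) :=
      indepPoly_comap_congr G hf1
    have hg2 : indepPoly ((G.comap (Subtype.val : {v // sptPred G u w v} → V)).comap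
        (Subtype.val : {x : {v // sptPred G u w v} //
          x ≠ ⟨w, hw.ne', fun _ => le_refl w⟩} → {v // sptPred G u w v})) =
        indepPoly (G.comap (Subtype.val : {v // gpred G u S' v} → V)) :=
      indepPoly_comap_eq_of_equiv
        { toFun := fun x => ⟨x.val.val, x.val.2.1, fun ha => by
            refine Finset.mem_erase.2 ⟨?_, hup w hwS _ ha (x.val.2.2 ha)⟩
            intro hvw
            exact x.2 (Subtype.ext hvw)⟩
          invFun := fun v => ⟨⟨v.val, v.2.1, fun ha => S.min'_le v.val
              (Finset.mem_of_mem_erase (v.2.2 ha))⟩, by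
            intro heq
            have hvw : v.val = w := congrArg Subtype.val heq
            have : v.val ∈ S' := v.2.2 (hvw ▸ hw)
            exact (Finset.mem_erase.1 this).1 hvw⟩
          left_inv := fun x => by apply Subtype.ext; apply Subtype.ext; rfl
          right_inv := fun v => by apply Subtype.ext; rfl }
        (fun x y => Iff.rfl)
    -- tree-side splits
    have hlen2 : ∀ (p : {l : List V // IsStablePath G u l}) (w' : V),
        p.val[1]? = some w' → 2 ≤ p.val.length := by
      intro p w' hp
      obtain ⟨hlt, -⟩ := List.getElem?_eq_some_iff.1 hp
      omega
    have ht1 : indepPoly ((stablePathTree G u).comap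
        (Subtype.val : {p // tpred G u S p} → {l : List V // IsStablePath G u l})) =
        indepPoly ((stablePathTree G u).comap
          (Subtype.val : {p : {l : List V // IsStablePath G u l} // p.val[1]? = some w} →
          {l : List V // IsStablePath G u l})) *
        indepPoly ((stablePathTree G u).comap
          (Subtype.val : {p // tpred G u S' p} → {l : List V // IsStablePath G u l})) := by
      refine indepPoly_split (stablePathTree G u) _ _ _ ?_ ?_ ?_
      · intro p
        constructor
        · rintro ⟨h2, w', hw', hsec⟩
          rcases eq_or_ne w' w with rfl | hne
          · exact Or.inl hsec
          · exact Or.inr ⟨h2, w', Finset.mem_erase.2 ⟨hne, hw'⟩, hsec⟩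
        · rintro (h | ⟨h2, w', hw', hsec⟩)
          · exact ⟨hlen2 p w h, w, hwS, h⟩
          · exact ⟨h2, w', Finset.mem_of_mem_erase hw', hsec⟩
      · rintro p h1 ⟨h2, w', hw', hsec⟩
        rw [h1] at hsec
        exact (Finset.mem_erase.1 hw').1 ((Option.some.inj hsec).symm)
      · rintro x y hx ⟨h2y, w', hw', hsecy⟩ hadj
        have hsecs := spt_adj_second hadj (hlen2 x w hx) h2y
        rw [hx, hsecy] at hsecs
        exact (Finset.mem_erase.1 hw').1 ((Option.some.inj hsecs).symm)
    have ht2 : indepPoly ((stablePathTree G u).comap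
        (Subtype.val : {p // t3pred G u S p} → {l : List V // IsStablePath G u l})) =
        indepPoly ((stablePathTree G u).comap
          (Subtype.val : {p : {l : List V // IsStablePath G u l} //
            p.val[1]? = some w ∧ 3 ≤ p.val.length} → {l : List V // IsStablePath G u l})) *
        indepPoly ((stablePathTree G u).comap
          (Subtype.val : {p // t3pred G u S' p} → {l : List V // IsStablePath G u l})) := by
      refine indepPoly_split (stablePathTree G u) _ _ _ ?_ ?_ ?_
      · intro p
        constructor
        · rintro ⟨h3, w', hw', hsec⟩
          rcases eq_or_ne w' w with rfl | hne
          · exact Or.inl ⟨hsec, h3⟩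
          · exact Or.inr ⟨h3, w', Finset.mem_erase.2 ⟨hne, hw'⟩, hsec⟩
        · rintro (⟨hsec, h3⟩ | ⟨h3, w', hw', hsec⟩)
          · exact ⟨h3, w, hwS, hsec⟩
          · exact ⟨h3, w', Finset.mem_of_mem_erase hw', hsec⟩
      · rintro p ⟨h1, -⟩ ⟨h3, w', hw', hsec⟩
        rw [h1] at hsec
        exact (Finset.mem_erase.1 hw').1 ((Option.some.inj hsec).symm)
      · rintro x y ⟨hx, -⟩ ⟨h3y, w', hw', hsecy⟩ hadj
        have hsecs := spt_adj_second hadj (hlen2 x w hx) (by omega)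
        rw [hx, hsecy] at hsecs
        exact (Finset.mem_erase.1 hw').1 ((Option.some.inj hsecs).symm)
    -- structural isomorphisms
    have hi1 : indepPoly ((stablePathTree G u).comap
        (Subtype.val : {p : {l : List V // IsStablePath G u l} // p.val[1]? = some w} → _)) =
        indepPoly (stablePathTree (G.comap (Subtype.val : {v // sptPred G u w v} → V))
          ⟨w, hw.ne', fun _ => le_refl w⟩) :=
      indepPoly_comap_eq_of_equiv (sptFullEquiv hw) (sptFullEquiv_adj hw)
    have hi2 : indepPoly ((stablePathTree G u).comap
        (Subtype.val : {p : {l : List V // IsStablePath G u l} //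
          p.val[1]? = some w ∧ 3 ≤ p.val.length} → _)) =
        indepPoly ((stablePathTree (G.comap (Subtype.val : {v // sptPred G u w v} → V))
          ⟨w, hw.ne', fun _ => le_refl w⟩).comap
          (Subtype.val : {m // m ≠ sptRoot
            (G.comap (Subtype.val : {v // sptPred G u w v} → V))
            ⟨w, hw.ne', fun _ => le_refl w⟩} → _)) := by
      refine indepPoly_comap_eq_of_equiv
        (((Equiv.subtypeSubtypeEquivSubtypeInter
            (fun p : {l : List V // IsStablePath G u l} => p.val[1]? = some w)
            (fun p : {l : List V // IsStablePath G u l} => 3 ≤ p.val.length)).symm.trans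
          ((sptFullEquiv hw).subtypeEquiv (fun x => ?_))) ) (fun x y => ?_)
      · rw [Ne, sptFullEquiv_eq_root_iff hw x]
        have h2 := hlen2 x.val w x.2
        constructor
        · omega
        · intro h
          rcases Nat.lt_or_ge (x.val : List V).length 3 with hlt | hge
          · exact absurd (by omega) h
          · exact hge
      · exact sptFullEquiv_adj hw ⟨x.val, x.2.1⟩ ⟨y.val, y.2.1⟩
    -- outer induction hypothesis
    have hcardW : Nat.card {v // sptPred G u w v} ≤ n := by
      haveI := Fintype.ofFinite V
      have hlt : Fintype.card {v // sptPred G u w v} < Fintype.card V :=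
        Fintype.card_subtype_lt (x := u) (by simp [sptPred])
      have e1 : Nat.card {v // sptPred G u w v} = Fintype.card {v // sptPred G u w v} :=
        Nat.card_eq_fintype_card
      have e2 : Nat.card V = Fintype.card V := Nat.card_eq_fintype_card
      omega
    have houter := ih {v // sptPred G u w v}
      (G.comap (Subtype.val : {v // sptPred G u w v} → V))
      ⟨w, hw.ne', fun _ => le_refl w⟩ hcardW
    unfold SPTId at houter
    -- inner induction hypothesis
    have hinner := ihS S' hS'sub hSN' hup'
    -- assemble
    rw [ht1, ht2, hg1, hi1, hi2]
    rw [hg2] at houter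
    linear_combination (-(indepPoly ((stablePathTree G u).comap
        (Subtype.val : {p // t3pred G u S' p} → {l : List V // IsStablePath G u l})))) * houter +
      (indepPoly (stablePathTree (G.comap (Subtype.val : {v // sptPred G u w v} → V))
          ⟨w, hw.ne', fun _ => le_refl w⟩)) * hinner

end MASTER

lemma spt_main : ∀ (n : ℕ) {V : Type u} [Finite V] [LinearOrder V]
    (G : SimpleGraph V) (u : V), Nat.card V ≤ n → SPTId G u := by
  intro n
  induction n with
  | zero =>
    intro V _ _ G u hV
    haveI : Nonempty V := ⟨u⟩
    have hpos : 0 < Nat.card V := Nat.card_pos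
    omega
  | succ n ih =>
    intro V _ _ G u hV
    classical
    haveI := Fintype.ofFinite V
    set N : Finset V := Finset.univ.filter (fun v => G.Adj u v) with hN
    have hNmem : ∀ v, v ∈ N ↔ G.Adj u v := fun v => by simp [hN]
    have hrecG := indepPoly_deletion G u
    have hrecT := indepPoly_deletion (stablePathTree G u) (sptRoot G u)
    have hGu : indepPoly (G.comap (Subtype.val : {v // v ≠ u} → V)) =
        indepPoly (G.comap (Subtype.val : {v // gpred G u N v} → V)) :=
      indepPoly_comap_congr G (fun v =>
        ⟨fun h => ⟨h, fun ha => (hNmem v).2 ha⟩, fun h => h.1⟩)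
    have hlen1 : ∀ p : {l : List V // IsStablePath G u l}, 1 ≤ p.val.length :=
      fun p => List.length_pos_iff.2 p.2.1
    have hsec : ∀ p : {l : List V // IsStablePath G u l}, 2 ≤ p.val.length →
        ∃ w ∈ N, p.val[1]? = some w := by
      intro p h2
      have hlt : 1 < p.val.length := by omega
      exact ⟨p.val[1], (hNmem _).2 (isp_second_adj p (List.getElem?_eq_getElem hlt)),
        List.getElem?_eq_getElem hlt⟩
    have hTr : indepPoly ((stablePathTree G u).comap
        (Subtype.val : {p // p ≠ sptRoot G u} → {l : List V // IsStablePath G u l})) =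
        indepPoly ((stablePathTree G u).comap
          (Subtype.val : {p // tpred G u N p} → {l : List V // IsStablePath G u l})) := by
      refine indepPoly_comap_congr (stablePathTree G u) (fun p => ?_)
      constructor
      · intro hne
        have h1 : p.val.length ≠ 1 := fun h => hne ((spt_eq_root_iff p).2 h)
        have h2 : 2 ≤ p.val.length := by have := hlen1 p; omega
        exact ⟨h2, hsec p h2⟩
      · rintro ⟨h2, -⟩ heq
        have := (spt_eq_root_iff p).1 heq
        omega
    have hTNr : indepPoly ((stablePathTree G u).comap
        (Subtype.val : {p // p ≠ sptRoot G u ∧ ¬(stablePathTree G u).Adj (sptRoot G u) p} →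
          {l : List V // IsStablePath G u l})) =
        indepPoly ((stablePathTree G u).comap
          (Subtype.val : {p // t3pred G u N p} → {l : List V // IsStablePath G u l})) := by
      refine indepPoly_comap_congr (stablePathTree G u) (fun p => ?_)
      constructor
      · rintro ⟨hne, hnadj⟩
        have h1 : p.val.length ≠ 1 := fun h => hne ((spt_eq_root_iff p).2 h)
        have h2 : p.val.length ≠ 2 := fun h => hnadj ((spt_adj_root_iff p).2 h)
        have h3 : 3 ≤ p.val.length := by have := hlen1 p; omega
        exact ⟨h3, hsec p (by omega)⟩
      · rintro ⟨h3, -⟩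
        constructor
        · intro heq
          have := (spt_eq_root_iff p).1 heq
          omega
        · intro hadj
          have := (spt_adj_root_iff p).1 hadj
          omega
    have hmaster := spt_master G u (fun W _ _ H x hx => ih H x hx) hV N (fun v hv => (hNmem v).1 hv)
      (fun a ha b hb _ => (hNmem b).2 hb)
    unfold SPTId
    rw [hrecG, hrecT, hGu, hTr, hTNr]
    linear_combination (X : Polynomial ℝ) * hmaster

theorem indepPoly_stablePathTree_ratio {V : Type*} [Finite V] [LinearOrder V]
    (G : SimpleGraph V) (u : V) :
    indepPoly (G.comap (Subtype.val : {v : V // v ≠ u} → V)) *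
        indepPoly (stablePathTree G u) =
      indepPoly G *
        indepPoly ((stablePathTree G u).comap
          (Subtype.val :
            {p : {l : List V // IsStablePath G u l} // p ≠ sptRoot G u} →
              {l : List V // IsStablePath G u l})) := by
  exact spt_main (Nat.card V) G u le_rfl
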